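/- For every n ≥ 1, the FDFA F_n defined as follows is saturated and characterizes L_n: over Σ = {1,…,n}, L_n is the set of infinite words w such that (a) every letter i is followed by a letter j ≤ i+1, and (b) the number of letters occurring infinitely often in w is odd. The leading automaton of F_n has states {⊥, q₁,…,q_n}, initial state q_n, transitions δ(q_i, j) = q_j if j ≤ i+1 and ⊥ otherwise, δ(⊥, j) = ⊥. The progress DFA at ⊥ is a single rejecting sink. The progress DFA at each q_i has states [1..n] × [1..n], initial state (n,1), transitions ((s,b), σ) ↦ (min(s,σ), max(b,σ)), and accepting states {(s,b) : b − s is even}. Then for every (u,v) ∈ Σ* × Σ⁺, (u,v) is accepted by F_n iff u·v^ω ∈ L_n. -/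

import Mathlib

open Classical

/-- `wpow v n` is the word `v` repeated `n` times. -/
def wpow {α : Type} (v : List α) : ℕ → List α
  | 0 => []
  | n + 1 => wpow v n ++ v

/-- The ultimately periodic infinite word `u·v^ω` (meaningful when `v ≠ []`). -/
def upWord {α : Type} [Inhabited α] (u v : List α) : ℕ → α := fun n =>
  if n < u.length then u.getD n default
  else v.getD ((n - u.length) % v.length) default

/-- `l` is a prefix of the infinite word `w`. -/
def prefOf {α : Type} [Inhabited α] (l : List α) (w : ℕ → α) : Prop :=
  ∀ i < l.length, w i = l.getD i default

/-- A complete deterministic automaton (no acceptance condition). -/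
structure DetAuto (α : Type) : Type 1 where
  State : Type
  [fin : Fintype State]
  init : State
  step : State → α → State

attribute [instance] DetAuto.fin

namespace DetAuto

variable {α : Type}

/-- The state reached from `q` after reading the finite word `w`. -/
def run (A : DetAuto α) (q : A.State) (w : List α) : A.State := w.foldl A.step q

/-- The state reached from the initial state after reading `w`. -/
def eval (A : DetAuto α) (w : List α) : A.State := A.run A.init w

/-- The (infinite) run of `A` on an infinite word `w`. -/
def runSeq (A : DetAuto α) (w : ℕ → α) : ℕ → A.State
  | 0 => A.init
  | n + 1 => A.step (A.runSeq w n) (w n)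

lemma exists_rep (A : DetAuto α) (u v : List α) :
    ∃ i, ∃ j, 1 ≤ j ∧ A.eval (u ++ wpow v i) = A.eval (u ++ wpow v (i + j)) := by
  obtain ⟨a, b, hab, hfab⟩ :=
    Finite.exists_ne_map_eq_of_infinite (fun n : ℕ => A.eval (u ++ wpow v n))
  rcases Nat.lt_or_gt_of_ne hab with h | h
  · exact ⟨a, b - a, by omega, by rw [Nat.add_sub_cancel' h.le]; exact hfab⟩
  · exact ⟨b, a - b, by omega, by rw [Nat.add_sub_cancel' h.le]; exact hfab.symm⟩

/-- The least `i` in the normalization of `(u,v)` w.r.t. `A`. -/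
noncomputable def normI (A : DetAuto α) (u v : List α) : ℕ :=
  Nat.find (A.exists_rep u v)

lemma normI_spec (A : DetAuto α) (u v : List α) :
    ∃ j, 1 ≤ j ∧ A.eval (u ++ wpow v (A.normI u v))
      = A.eval (u ++ wpow v (A.normI u v + j)) :=
  Nat.find_spec (A.exists_rep u v)

/-- The least `j` in the normalization of `(u,v)` w.r.t. `A`. -/
noncomputable def normJ (A : DetAuto α) (u v : List α) : ℕ :=
  Nat.find (A.normI_spec u v)

/-- The normalization `(x, y) = (u·v^i, v^j)` of `(u,v)` w.r.t. `A`. -/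
noncomputable def normalize (A : DetAuto α) (u v : List α) : List α × List α :=
  (u ++ wpow v (A.normI u v), wpow v (A.normJ u v))

/-- The product automaton. -/
def prod (A B : DetAuto α) : DetAuto α where
  State := A.State × B.State
  init := (A.init, B.init)
  step := fun p σ => (A.step p.1 σ, B.step p.2 σ)

end DetAuto

/-- A family of DFAs: a leading automaton and a progress DFA for each of its states. -/
structure FDFA (α : Type) : Type 1 where
  leading : DetAuto α
  pState : leading.State → Type
  [pFin : ∀ q, Fintype (pState q)]
  pInit : ∀ q, pState q
  pStep : ∀ q, pState q → α → pState q
  pAcc : ∀ q, Set (pState q)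

attribute [instance] FDFA.pFin

namespace FDFA

variable {α : Type}

/-- The progress DFA at state `q` accepts the finite word `y`. -/
def progAccept (F : FDFA α) (q : F.leading.State) (y : List α) : Prop :=
  y.foldl (F.pStep q) (F.pInit q) ∈ F.pAcc q

/-- `F` accepts the pair `(u, v)`: with `(x,y)` the normalization of `(u,v)` w.r.t.
the leading automaton, the progress DFA at the state reached on `x` accepts `y`. -/
noncomputable def Accept (F : FDFA α) (u v : List α) : Prop :=
  F.progAccept (F.leading.eval (F.leading.normalize u v).1) (F.leading.normalize u v).2

/-- `F` is saturated: acceptance of `(u,v)` depends only on the infinite word `u·v^ω`. -/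
def Saturated [Inhabited α] (F : FDFA α) : Prop :=
  ∀ u v u' v' : List α, v ≠ [] → v' ≠ [] → upWord u v = upWord u' v' →
    (F.Accept u v ↔ F.Accept u' v')

/-- The complement FDFA: same structure, complemented accepting states. -/
def compl (F : FDFA α) : FDFA α :=
  { F with pAcc := fun q => (F.pAcc q)ᶜ }

end FDFA

/-- The letter `a : Fin n` represents the number `a.val + 1 ∈ {1,…,n}`. A word is in
`LnSet n` iff every letter `i` is followed by a letter `j ≤ i + 1` and the number of
letters occurring infinitely often is odd. -/
def LnSet (n : ℕ) : Set (ℕ → Fin n) :=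
  {w | (∀ p : ℕ, (w (p + 1)).val ≤ (w p).val + 1) ∧
    Odd (Set.ncard {a : Fin n | {p : ℕ | w p = a}.Infinite})}

/-- States of the progress DFAs of `FnFdfa`: a rejecting sink at `⊥`, and pairs
`(s, b) ∈ [1..n] × [1..n]` (encoded in `Fin n`) elsewhere. -/
def FnP (n : ℕ) : Option (Fin n) → Type
  | none => PUnit
  | some _ => Fin n × Fin n

instance FnP.fintype (n : ℕ) (q : Option (Fin n)) : Fintype (FnP n q) :=
  match q with
  | none => inferInstanceAs (Fintype PUnit)
  | some _ => inferInstanceAs (Fintype (Fin n × Fin n))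

/-- The leading automaton of `F_n`: states `{⊥} ∪ {q₁,…,q_n}` (state `q_i` encoded as
`some ⟨i-1⟩`, `⊥` as `none`), initial state `q_n`, with `δ(q_i, j) = q_j` if
`j ≤ i + 1` and `⊥` otherwise, and `δ(⊥, j) = ⊥`. -/
def FnLead (n : ℕ) (hn : 0 < n) : DetAuto (Fin n) where
  State := Option (Fin n)
  init := some ⟨n - 1, by omega⟩
  step := fun q j =>
    match q with
    | none => none
    | some i => if j.val ≤ i.val + 1 then some j else none

/-- The FDFA `F_n` for `L_n`: the progress DFA at `⊥` is a rejecting sink, and at each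
`q_i` it tracks the smallest and biggest letters `(s, b)` read so far (initially
`(n, 1)`), accepting iff `b − s` is even. -/
def FnFdfa (n : ℕ) (hn : 0 < n) : FDFA (Fin n) where
  leading := FnLead n hn
  pState := FnP n
  pFin := fun q => FnP.fintype n q
  pInit := fun q =>
    match q with
    | none => PUnit.unit
    | some _ => ((⟨n - 1, by omega⟩ : Fin n), (⟨0, hn⟩ : Fin n))
  pStep := fun q =>
    match q with
    | none => fun p _ => p
    | some _ => fun p σ => (min p.1 σ, max p.2 σ)
  pAcc := fun q =>
    match q with
    | none => ∅
    | some _ => {p : Fin n × Fin n | Even (p.2.val - p.1.val)}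

section Aux

lemma wpow_length {α : Type} (v : List α) (m : ℕ) : (wpow v m).length = m * v.length := by
  induction m with
  | zero => simp [wpow]
  | succ k ih => simp [wpow, ih, Nat.succ_mul]

lemma wpow_add {α : Type} (v : List α) (a b : ℕ) :
    wpow v (a + b) = wpow v a ++ wpow v b := by
  induction b with
  | zero => simp [wpow]
  | succ k ih =>
    rw [show a + (k + 1) = (a + k) + 1 by omega, wpow, ih, wpow, List.append_assoc]

lemma wpow_wpow {α : Type} (v : List α) (a b : ℕ) : wpow (wpow v a) b = wpow v (a * b) := by
  induction b with
  | zero => simp [wpow]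
  | succ k ih => rw [wpow, ih, show a * (k + 1) = a * k + a by ring, wpow_add]

lemma mem_wpow {α : Type} {v : List α} {a : α} {m : ℕ} (hm : 1 ≤ m) :
    a ∈ wpow v m ↔ a ∈ v := by
  induction m with
  | zero => omega
  | succ k ih =>
    rcases Nat.eq_zero_or_pos k with hk | hk
    · subst hk; simp [wpow]
    · simp [wpow, List.mem_append, ih hk]

lemma getD_wpow {α : Type} (v : List α) (d : α) {m p : ℕ} (hp : p < m * v.length) :
    (wpow v m).getD p d = v.getD (p % v.length) d := by
  induction m with
  | zero => omega
  | succ k ih =>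
    have hmul : (k + 1) * v.length = k * v.length + v.length := by ring
    by_cases h : p < k * v.length
    · rw [wpow, List.getD_append _ _ _ _ (by rw [wpow_length]; exact h)]
      exact ih h
    · have h1 : p - k * v.length < v.length := by omega
      rw [wpow, List.getD_append_right _ _ _ _ (by rw [wpow_length]; omega), wpow_length]
      congr 1
      have h2 : p % v.length = (p - k * v.length) % v.length := by
        conv_lhs => rw [show p = (p - k * v.length) + k * v.length by omega]
        rw [Nat.add_mul_mod_self_right]
      rw [h2, Nat.mod_eq_of_lt h1]

lemma upWord_getD {α : Type} [Inhabited α] (u v : List α) (m p : ℕ)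
    (hp : p < u.length + m * v.length) :
    (u ++ wpow v m).getD p default = upWord u v p := by
  unfold upWord
  by_cases h : p < u.length
  · rw [List.getD_append _ _ _ _ h, if_pos h]
  · rw [List.getD_append_right _ _ _ _ (by omega), if_neg h,
      getD_wpow _ _ (by omega)]

section Fn

variable {n : ℕ} {hn : 0 < n}

/-- The successor constraint relation. -/
def FnR (n : ℕ) : Fin n → Fin n → Prop := fun a b => b.val ≤ a.val + 1

lemma lead_run_none (n : ℕ) (hn : 0 < n) (w : List (Fin n)) :
    (FnFdfa n hn).leading.run none w = none := by
  induction w with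
  | nil => rfl
  | cons a w ih => exact ih

lemma lead_run_none_iff (n : ℕ) (hn : 0 < n) (w : List (Fin n)) : ∀ i : Fin n,
    ((FnFdfa n hn).leading.run (some i) w = none ↔ ¬ List.Chain (FnR n) i w) := by
  induction w with
  | nil => intro i; exact ⟨fun h => absurd h (Option.some_ne_none i), fun h => absurd List.Chain.nil h⟩
  | cons a w ih =>
    intro i
    have hstep : (FnFdfa n hn).leading.run (some i) (a :: w)
        = (FnFdfa n hn).leading.run ((FnFdfa n hn).leading.step (some i) a) w := rfl
    by_cases h : a.val ≤ i.val + 1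
    · have : (FnFdfa n hn).leading.step (some i) a = some a := by
        show (if a.val ≤ i.val + 1 then some a else none) = some a
        rw [if_pos h]
      rw [hstep, this, ih a, List.Chain, List.Chain, List.isChain_cons_cons]
      simp [FnR, h]
    · have : (FnFdfa n hn).leading.step (some i) a = none := by
        show (if a.val ≤ i.val + 1 then some a else none) = none
        rw [if_neg h]
      rw [hstep, this]
      simp only [lead_run_none, List.Chain, List.isChain_cons_cons, true_iff]
      refine iff_of_true rfl ?_
      intro hc
      exact h hc.1

lemma prog_fold (i : Fin n) (y : List (Fin n)) :
    ∀ p : Fin n × Fin n,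
      y.foldl ((FnFdfa n hn).pStep (some i)) p = (y.foldl min p.1, y.foldl max p.2) := by
  induction y with
  | nil => intro p; rfl
  | cons a y ih =>
    intro p
    exact ih (min p.1 a, max p.2 a)

end Fn

section Fold

variable {β : Type} [LinearOrder β]

lemma foldl_min_le_init (l : List β) : ∀ c : β, l.foldl min c ≤ c := by
  induction l with
  | nil => intro c; exact le_refl c
  | cons a l ih => intro c; exact le_trans (ih (min c a)) (min_le_left _ _)

lemma foldl_min_le_mem (l : List β) : ∀ c : β, ∀ a ∈ l, l.foldl min c ≤ a := by
  induction l with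
  | nil => intro c a ha; simp at ha
  | cons b l ih =>
    intro c a ha
    rcases List.mem_cons.1 ha with h | h
    · subst h; exact le_trans (foldl_min_le_init l _) (min_le_right _ _)
    · exact ih _ a h

lemma foldl_min_mem (l : List β) : ∀ c : β, l.foldl min c = c ∨ l.foldl min c ∈ l := by
  induction l with
  | nil => intro c; exact Or.inl rfl
  | cons a l ih =>
    intro c
    rcases ih (min c a) with h | h
    · rcases min_choice c a with h' | h'
      · exact Or.inl (by rw [List.foldl_cons, h, h'])
      · exact Or.inr (by rw [List.foldl_cons, h, h']; exact List.mem_cons_self)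
    · exact Or.inr (List.mem_cons_of_mem a h)

lemma foldl_max_le_init (l : List β) : ∀ c : β, c ≤ l.foldl max c := by
  induction l with
  | nil => intro c; exact le_refl c
  | cons a l ih => intro c; exact le_trans (le_max_left _ _) (ih (max c a))

lemma foldl_max_le_mem (l : List β) : ∀ c : β, ∀ a ∈ l, a ≤ l.foldl max c := by
  induction l with
  | nil => intro c a ha; simp at ha
  | cons b l ih =>
    intro c a ha
    rcases List.mem_cons.1 ha with h | h
    · subst h; exact le_trans (le_max_right _ _) (foldl_max_le_init l _)
    · exact ih _ a h

lemma foldl_max_mem (l : List β) : ∀ c : β, l.foldl max c = c ∨ l.foldl max c ∈ l := by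
  induction l with
  | nil => intro c; exact Or.inl rfl
  | cons a l ih =>
    intro c
    rcases ih (max c a) with h | h
    · rcases max_choice c a with h' | h'
      · exact Or.inl (by rw [List.foldl_cons, h, h'])
      · exact Or.inr (by rw [List.foldl_cons, h, h']; exact List.mem_cons_self)
    · exact Or.inr (List.mem_cons_of_mem a h)

end Fold

section Occ

variable {n : ℕ}

lemma occ_infinite [Inhabited (Fin n)] (u v : List (Fin n)) {a : Fin n} (ha : a ∈ v) :
    {p : ℕ | upWord u v p = a}.Infinite := by
  obtain ⟨k, hk, hget⟩ := List.mem_iff_getElem.1 ha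
  have hv : 0 < v.length := lt_of_le_of_lt (Nat.zero_le k) hk
  refine Set.infinite_of_injective_forall_mem
    (f := fun m : ℕ => u.length + (k + m * v.length)) ?_ ?_
  · intro m m' h
    simp only at h
    have : m * v.length = m' * v.length := by omega
    exact Nat.eq_of_mul_eq_mul_right hv this
  · intro m
    simp only [Set.mem_setOf_eq, upWord]
    rw [if_neg (by omega), show u.length + (k + m * v.length) - u.length = k + m * v.length
      by omega, Nat.add_mul_mod_self_right, Nat.mod_eq_of_lt hk,
      List.getD_eq_getElem _ _ hk, hget]

lemma occ_finite [Inhabited (Fin n)] (u v : List (Fin n)) (hv : v ≠ []) {a : Fin n}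
    (ha : a ∉ v) : ¬ {p : ℕ | upWord u v p = a}.Infinite := by
  have hvl : 0 < v.length := List.length_pos_iff.2 hv
  intro h
  apply h
  apply Set.Finite.subset (Set.finite_Iio u.length)
  intro p hp
  simp only [Set.mem_setOf_eq, upWord] at hp
  by_contra hlt
  simp only [Set.mem_Iio, not_lt] at hlt
  rw [if_neg (by omega)] at hp
  apply ha
  rw [← hp]
  have hr : (p - u.length) % v.length < v.length := Nat.mod_lt _ hvl
  rw [List.getD_eq_getElem _ _ hr]
  exact List.getElem_mem hr

lemma discrete_ivt {w : ℕ → Fin n} (hA : ∀ p, (w (p + 1)).val ≤ (w p).val + 1)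
    {p0 p1 : ℕ} (h01 : p0 ≤ p1) {c : ℕ} (hc0 : (w p0).val ≤ c) (hc1 : c ≤ (w p1).val) :
    ∃ p, p0 ≤ p ∧ (w p).val = c := by
  have hex : ∃ k, c ≤ (w (p0 + k)).val :=
    ⟨p1 - p0, by rwa [Nat.add_sub_cancel' h01]⟩
  set k0 := Nat.find hex with hk0
  have hfind : c ≤ (w (p0 + k0)).val := Nat.find_spec hex
  rcases Nat.eq_zero_or_pos k0 with h0 | h0
  · refine ⟨p0, le_refl _, ?_⟩
    rw [h0, Nat.add_zero] at hfind
    omega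
  · refine ⟨p0 + k0, by omega, ?_⟩
    have hprev : ¬ c ≤ (w (p0 + (k0 - 1))).val := Nat.find_min hex (by omega)
    have hstep := hA (p0 + (k0 - 1))
    have : p0 + (k0 - 1) + 1 = p0 + k0 := by omega
    rw [this] at hstep
    omega

end Occ

section Char

lemma eval_append {α : Type} (A : DetAuto α) (l1 l2 : List α) :
    A.eval (l1 ++ l2) = A.run (A.eval l1) l2 := by
  simp [DetAuto.eval, DetAuto.run, List.foldl_append]

lemma chain_iff_get' {α : Type} {R : α → α → Prop} {a : α} {l : List α} :
    List.Chain R a l ↔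
      (∀ h : 0 < l.length, R a (l.get ⟨0, h⟩)) ∧
        ∀ (i : ℕ) (h : i < l.length - 1),
          R (l.get ⟨i, by omega⟩) (l.get ⟨i + 1, by omega⟩) := by
  rw [List.Chain, List.isChain_iff_getElem]
  constructor
  · intro h
    exact ⟨fun h0 => by simpa using h 0 (by simpa using h0),
      fun i hi => by
        have := h (i + 1) (by simp; omega)
        rw [List.getElem_cons_succ, List.getElem_cons_succ] at this
        simpa using this⟩
  · rintro ⟨h0, h1⟩ i hi
    cases i with
    | zero => simpa using h0 (by simp at hi; omega)
    | succ k => simpa using h1 k (by simp at hi; omega)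

lemma Fn_char (n : ℕ) (hn : 0 < n) [Inhabited (Fin n)] (u v : List (Fin n)) (hv : v ≠ []) :
    (FnFdfa n hn).Accept u v ↔ upWord u v ∈ LnSet n := by
  have hvl : 0 < v.length := List.length_pos_iff.2 hv
  set A := (FnFdfa n hn).leading with hA
  set i := A.normI u v with hi
  set j := A.normJ u v with hjdef
  have hspec : 1 ≤ j ∧ A.eval (u ++ wpow v i) = A.eval (u ++ wpow v (i + j)) :=
    Nat.find_spec (A.normI_spec u v)
  obtain ⟨hj1, heval⟩ := hspec
  set x := u ++ wpow v i with hx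
  set y := wpow v j with hy
  have hxy : u ++ wpow v (i + j) = x ++ y := by
    rw [hx, hy, wpow_add, List.append_assoc]
  rw [hxy] at heval
  have heval' : ∀ k, A.eval (x ++ wpow y k) = A.eval x := by
    intro k
    induction k with
    | zero => simp [wpow]
    | succ m ih =>
      have : x ++ wpow y (m + 1) = (x ++ wpow y m) ++ y := by
        rw [wpow, ← List.append_assoc]
      rw [this, eval_append, ih, ← eval_append, ← heval]
  -- bridge between chains on prefixes and the infinite word condition
  have hbridge : ∀ m : ℕ,
      (List.Chain (FnR n) ⟨n - 1, by omega⟩ (u ++ wpow v m) ↔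
        ∀ p, p + 1 < u.length + m * v.length →
          (upWord u v (p + 1)).val ≤ (upWord u v p).val + 1) := by
    intro m
    have hlen : (u ++ wpow v m).length = u.length + m * v.length := by
      simp [wpow_length]
    have hentry : ∀ p (h : p < (u ++ wpow v m).length),
        (u ++ wpow v m).get ⟨p, h⟩ = upWord u v p := by
      intro p h
      rw [List.get_eq_getElem, ← List.getD_eq_getElem _ default h]
      exact upWord_getD u v m p (by omega)
    rw [chain_iff_get']
    constructor
    · rintro ⟨-, h2⟩ p hp
      have hp' : p < (u ++ wpow v m).length - 1 := by omega
      have := h2 p hp'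
      rw [hentry, hentry] at this
      exact this
    · intro h
      refine ⟨fun h0 => ?_, fun p hp => ?_⟩
      · show ((u ++ wpow v m).get ⟨0, h0⟩).val ≤ (n - 1) + 1
        have := ((u ++ wpow v m).get ⟨0, h0⟩).isLt
        omega
      · rw [hentry, hentry]
        exact h p (by omega)
  have hinit : A.init = some ⟨n - 1, by omega⟩ := rfl
  by_cases hCA : ∀ p, (upWord u v (p + 1)).val ≤ (upWord u v p).val + 1
  · -- chain condition holds
    have hxchain : List.Chain (FnR n) ⟨n - 1, by omega⟩ (u ++ wpow v i) :=
      (hbridge i).mpr (fun p _ => hCA p)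
    have hxne : A.eval x ≠ none := by
      rw [hx]
      show A.run A.init (u ++ wpow v i) ≠ none
      rw [hinit]
      intro hcon
      exact (lead_run_none_iff n hn (u ++ wpow v i) _).mp hcon hxchain
    obtain ⟨q, hq⟩ : ∃ q, A.eval x = some q := by
      cases h : A.eval x with
      | none => exact absurd h hxne
      | some q => exact ⟨q, rfl⟩
    -- min and max of the letters of v
    set s : Fin n := y.foldl min ⟨n - 1, by omega⟩ with hs
    set b : Fin n := y.foldl max ⟨0, hn⟩ with hb
    have hmemy : ∀ a : Fin n, a ∈ y ↔ a ∈ v := fun a => mem_wpow hj1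
    have hyne : y ≠ [] := by
      intro hcon
      have h := wpow_length v j
      rw [← hy, hcon] at h
      simp only [List.length_nil] at h
      rcases Nat.mul_eq_zero.mp h.symm with h' | h' <;> omega
    obtain ⟨a0, ha0⟩ := List.exists_mem_of_ne_nil y hyne
    have hsle : ∀ a ∈ v, s ≤ a := fun a ha => foldl_min_le_mem y _ a ((hmemy a).mpr ha)
    have hble : ∀ a ∈ v, a ≤ b := fun a ha => foldl_max_le_mem y _ a ((hmemy a).mpr ha)
    have hsmem : s ∈ v := by
      rcases foldl_min_mem y (⟨n - 1, by omega⟩ : Fin n) with h | h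
      · have h1 : s ≤ a0 := foldl_min_le_mem y _ a0 ha0
        have hsval : s.val = n - 1 := by rw [hs, h]
        have h2 : a0 ≤ s := by
          rw [Fin.le_def, hsval]
          have := a0.isLt
          omega
        rw [← le_antisymm h2 h1]
        exact (hmemy a0).mp ha0
      · exact (hmemy s).mp (hs ▸ h)
    have hbmem : b ∈ v := by
      rcases foldl_max_mem y (⟨0, hn⟩ : Fin n) with h | h
      · have h1 : a0 ≤ b := foldl_max_le_mem y _ a0 ha0
        have hbval : b.val = 0 := by rw [hb, h]
        have h2 : b ≤ a0 := by
          rw [Fin.le_def, hbval]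
          omega
        rw [← le_antisymm h1 h2]
        exact (hmemy a0).mp ha0
      · exact (hmemy b).mp (hb ▸ h)
    have hsb : s ≤ b := hble s hsmem
    -- the set of letters occurring infinitely often
    have hSet : {a : Fin n | {p : ℕ | upWord u v p = a}.Infinite} = Set.Icc s b := by
      ext a
      simp only [Set.mem_setOf_eq, Set.mem_Icc]
      constructor
      · intro hainf
        have hav : a ∈ v := by
          by_contra hav
          exact occ_finite u v hv hav hainf
        exact ⟨hsle a hav, hble a hav⟩
      · rintro ⟨h1, h2⟩
        obtain ⟨p0, hp0mem, hp0gt⟩ := (occ_infinite u v hsmem).exists_gt u.length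
        obtain ⟨p1, hp1mem, hp1gt⟩ := (occ_infinite u v hbmem).exists_gt p0
        simp only [Set.mem_setOf_eq] at hp0mem hp1mem
        obtain ⟨p, hpge, hpval⟩ := discrete_ivt hCA (le_of_lt hp1gt) (c := a.val)
          (by rw [hp0mem]; exact h1) (by rw [hp1mem]; exact h2)
        have hwp : upWord u v p = a := Fin.ext hpval
        have hav : a ∈ v := by
          rw [← hwp]
          unfold upWord
          rw [if_neg (by omega), List.getD_eq_getElem _ _ (Nat.mod_lt _ hvl)]
          exact List.getElem_mem _
        exact occ_infinite u v hav
    have hcard : {a : Fin n | {p : ℕ | upWord u v p = a}.Infinite}.ncard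
        = b.val - s.val + 1 := by
      rw [hSet, ← Finset.coe_Icc, Set.ncard_coe_finset, Fin.card_Icc]
      have hsb' : s.val ≤ b.val := hsb
      omega
    -- compute acceptance
    have hAcc : (FnFdfa n hn).Accept u v ↔ Even (b.val - s.val) := by
      show (FnFdfa n hn).progAccept (A.eval x) y ↔ Even (b.val - s.val)
      rw [hq]
      show y.foldl ((FnFdfa n hn).pStep (some q)) ((FnFdfa n hn).pInit (some q))
          ∈ (FnFdfa n hn).pAcc (some q) ↔ Even (b.val - s.val)
      have hfold : y.foldl ((FnFdfa n hn).pStep (some q)) ((FnFdfa n hn).pInit (some q))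
          = (s, b) := by
        rw [show (FnFdfa n hn).pInit (some q) = ((⟨n - 1, by omega⟩ : Fin n), (⟨0, hn⟩ : Fin n))
          from rfl]
        rw [prog_fold, hs, hb]
      rw [hfold]
      exact Iff.rfl
    rw [hAcc]
    constructor
    · intro heven
      refine ⟨hCA, ?_⟩
      rw [hcard]
      rcases heven with ⟨t, ht⟩
      exact ⟨t, by omega⟩
    · rintro ⟨-, hodd⟩
      rw [hcard] at hodd
      rcases hodd with ⟨t, ht⟩
      exact ⟨t, by omega⟩
  · -- chain condition fails : both sides false
    push_neg at hCA
    obtain ⟨p, hp⟩ := hCA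
    constructor
    · intro hacc
      set k := p + 2 with hk
      have hlen : p + 1 < u.length + (i + j * k) * v.length := by
        have h1 : k ≤ j * k := Nat.le_mul_of_pos_left k hj1
        have h2 : i + j * k ≤ (i + j * k) * v.length := Nat.le_mul_of_pos_right _ hvl
        omega
      have hxk : x ++ wpow y k = u ++ wpow v (i + j * k) := by
        rw [hx, hy, wpow_wpow, List.append_assoc, ← wpow_add]
      have hnc : ¬ List.Chain (FnR n) ⟨n - 1, by omega⟩ (u ++ wpow v (i + j * k)) := by
        rw [hbridge]
        push_neg
        exact ⟨p, hlen, by omega⟩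
      have hnone : A.eval x = none := by
        rw [← heval' k, hxk]
        show A.run A.init (u ++ wpow v (i + j * k)) = none
        rw [hinit]
        exact (lead_run_none_iff n hn _ _).mpr hnc
      have hacc' : (FnFdfa n hn).progAccept (A.eval x) y := hacc
      rw [hnone] at hacc'
      have hacc'' : y.foldl ((FnFdfa n hn).pStep none) ((FnFdfa n hn).pInit none)
          ∈ (∅ : Set (FnP n none)) := hacc'
      exact absurd hacc'' (Set.notMem_empty _)
    · rintro ⟨h1, -⟩
      have := h1 p
      omega

end Char

/-- For every `n ≥ 1`, the FDFA `F_n` is saturated and characterizes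
`L_n`: it accepts `(u,v)` iff `u·v^ω ∈ L_n`. -/
theorem Fn_saturated_and_characterizes (n : ℕ) (hn : 0 < n) :
    haveI : Inhabited (Fin n) := ⟨⟨0, hn⟩⟩
    (FnFdfa n hn).Saturated ∧
    ∀ u v : List (Fin n), v ≠ [] →
      ((FnFdfa n hn).Accept u v ↔ upWord u v ∈ LnSet n) := by
  refine ⟨?_, ?_⟩
  · intro u v u' v' hv hv' heq
    rw [@Fn_char n hn ⟨⟨0, hn⟩⟩ u v hv, @Fn_char n hn ⟨⟨0, hn⟩⟩ u' v' hv', heq]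
  · intro u v hv
    exact @Fn_char n hn ⟨⟨0, hn⟩⟩ u v hv
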